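/- Let f : ℝ^d → ℝ be convex and L-smooth (‖∇f(x) − ∇f(y)‖ ≤ L‖x − y‖), with minimum value f_* attained on a nonempty set Ω_*. Suppose f satisfies the Hölderian error bound dist(x, Ω_*) ≤ c (f(x) − f_*)^θ for all x in the sublevel set S_ξ = {x : f(x) − f_* ≤ ξ}, with θ ∈ (0,1) and c > 0. Then for all x ∈ S_ξ, dist(x, Ω_*) ≤ c^{1/(1−θ)} ‖∇f(x)‖^{θ/(1−θ)}. -/

import Mathlib

open Filter

lemma convex_grad_ineq {d : ℕ} (f : EuclideanSpace ℝ (Fin d) → ℝ)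
    (hconv : ConvexOn ℝ Set.univ f) {x g : EuclideanSpace ℝ (Fin d)}
    (hg : HasGradientAt f g x) (y : EuclideanSpace ℝ (Fin d)) :
    (inner ℝ g (y - x) : ℝ) ≤ f y - f x := by
  have hF : HasFDerivAt f (InnerProductSpace.toDual ℝ _ g) x :=
    hasGradientAt_iff_hasFDerivAt.mp hg
  set φ : ℝ → EuclideanSpace ℝ (Fin d) := fun t => x + t • (y - x) with hφdef
  have hφ0 : φ 0 = x := by simp [φ]
  have hφ1 : φ 1 = y := by simp [φ]
  have hφd : HasDerivAt φ (y - x) 0 := by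
    simpa [φ] using ((hasDerivAt_id (0:ℝ)).smul_const (y - x)).const_add x
  have hh : HasDerivAt (f ∘ φ) (inner ℝ g (y - x) : ℝ) 0 := by
    have h1 : HasFDerivAt f (InnerProductSpace.toDual ℝ _ g) (φ 0) := by rw [hφ0]; exact hF
    have := h1.comp_hasDerivAt (0:ℝ) hφd
    simpa [InnerProductSpace.toDual_apply_apply] using this
  -- slope bound from convexity
  have hslope : ∀ t ∈ Set.Ioo (0:ℝ) 1, slope (f ∘ φ) 0 t ≤ f y - f x := by
    intro t ht
    have hconv' : f (φ t) ≤ (1 - t) * f x + t * f y := by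
      have := hconv.2 (Set.mem_univ x) (Set.mem_univ y)
        (by linarith [ht.2] : (0:ℝ) ≤ 1 - t) (le_of_lt ht.1) (by ring)
      have hpt : (1 - t) • x + t • y = φ t := by
        simp only [φ]
        module
      rw [hpt] at this
      simpa [smul_eq_mul] using this
    have : (f (φ t) - f x) / t ≤ f y - f x := by
      rw [div_le_iff₀ ht.1]
      nlinarith [ht.1]
    simpa [slope_def_field, hφ0, div_eq_inv_mul] using this
  have htend : Tendsto (slope (f ∘ φ) 0) (nhdsWithin 0 (Set.Ioi 0))
      (nhds (inner ℝ g (y - x) : ℝ)) :=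
    (hasDerivAt_iff_tendsto_slope.mp hh).mono_left
      (nhdsWithin_mono _ (fun t ht => ne_of_gt ht))
  refine le_of_tendsto htend ?_
  filter_upwards [Ioo_mem_nhdsGT_of_mem (by norm_num : (0:ℝ) ∈ Set.Ico 0 1)] with t ht
  exact hslope t ht


theorem heb_dist_grad_bound {d : ℕ} (L c θ ξ : ℝ) (hL : 0 < L) (hc : 0 < c)
    (hθ : θ ∈ Set.Ioo (0:ℝ) 1)
    (f : EuclideanSpace ℝ (Fin d) → ℝ)
    (f' : EuclideanSpace ℝ (Fin d) → EuclideanSpace ℝ (Fin d))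
    (hconv : ConvexOn ℝ Set.univ f)
    (hgrad : ∀ x, HasGradientAt f (f' x) x)
    (hlip : ∀ x y, ‖f' x - f' y‖ ≤ L * ‖x - y‖)
    (Ω : Set (EuclideanSpace ℝ (Fin d)))
    (hΩ : Ω = {x | ∀ y, f x ≤ f y}) (hne : Ω.Nonempty)
    (fstar : ℝ) (hfs : ∀ x ∈ Ω, f x = fstar)
    (heb : ∀ x, f x - fstar ≤ ξ → Metric.infDist x Ω ≤ c * (f x - fstar) ^ θ)
    (x : EuclideanSpace ℝ (Fin d)) (hx : f x - fstar ≤ ξ) :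
    Metric.infDist x Ω ≤ c ^ (1 / (1 - θ)) * ‖f' x‖ ^ (θ / (1 - θ)) := by
  obtain ⟨x₀, hx₀⟩ := hne
  have hmin : ∀ y, f x₀ ≤ f y := by rw [hΩ] at hx₀; exact hx₀
  have hfx₀ : f x₀ = fstar := hfs x₀ hx₀
  set D := Metric.infDist x Ω with hD
  set G := ‖f' x‖ with hG
  set a := f x - fstar with ha
  have ha0 : 0 ≤ a := by have := hmin x; simp [ha, ← hfx₀]; linarith
  have hD0 : 0 ≤ D := Metric.infDist_nonneg
  have hG0 : 0 ≤ G := norm_nonneg _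
  have hθ1 : 0 < 1 - θ := by linarith [hθ.2]
  have hDle : D ≤ c * a ^ θ := heb x hx
  -- key: a ≤ G * D
  have key : a ≤ G * D := by
    have hz : ∀ z ∈ Ω, a ≤ G * dist x z := by
      intro z hz
      have h1 := convex_grad_ineq f hconv (hgrad x) z
      have h2 : (inner ℝ (f' x) (x - z) : ℝ) ≤ G * ‖x - z‖ :=
        (real_inner_le_norm _ _).trans (le_of_eq rfl)
      have h3 : (inner ℝ (f' x) (x - z) : ℝ) = - (inner ℝ (f' x) (z - x) : ℝ) := by
        rw [← inner_neg_right]; congr 1; abel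
      have hfz : f z = fstar := hfs z hz
      rw [dist_eq_norm]
      have : a = f x - f z := by rw [ha, hfz]
      linarith [h1, h3 ▸ h2]
    rcases eq_or_lt_of_le hG0 with hG0' | hGpos
    · obtain ⟨z, hzΩ⟩ : Ω.Nonempty := ⟨x₀, hx₀⟩
      have := hz z hzΩ
      rw [← hG0'] at this ⊢
      simpa using this
    · rw [← div_le_iff₀' hGpos]
      by_contra hlt
      push_neg at hlt
      obtain ⟨z, hzΩ, hzd⟩ := (Metric.infDist_lt_iff ⟨x₀, hx₀⟩).mp hlt
      have h4 := hz z hzΩ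
      rw [← div_le_iff₀' hGpos] at h4
      linarith
  rcases eq_or_lt_of_le hD0 with hD0' | hDpos
  · rw [← hD0']
    positivity
  -- D ≤ c * G^θ * D^θ
  have h1 : D ≤ c * G ^ θ * D ^ θ := by
    calc D ≤ c * a ^ θ := hDle
    _ ≤ c * (G * D) ^ θ :=
        mul_le_mul_of_nonneg_left (Real.rpow_le_rpow ha0 key hθ.1.le) hc.le
    _ = c * G ^ θ * D ^ θ := by
        rw [Real.mul_rpow hG0 hD0]; ring
  have hDθpos : (0:ℝ) < D ^ θ := Real.rpow_pos_of_pos hDpos θ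
  have h2 : D ^ (1 - θ) ≤ c * G ^ θ := by
    have hsplit : D = D ^ (1 - θ) * D ^ θ := by
      rw [← Real.rpow_add hDpos]; norm_num
    nth_rewrite 1 [hsplit] at h1
    exact le_of_mul_le_mul_right h1 hDθpos
  have h3 : (D ^ (1 - θ)) ^ (1 / (1 - θ)) ≤ (c * G ^ θ) ^ (1 / (1 - θ)) :=
    Real.rpow_le_rpow (Real.rpow_nonneg hD0 _) h2 (by positivity)
  calc D = (D ^ (1 - θ)) ^ (1 / (1 - θ)) := by
        rw [← Real.rpow_mul hD0, mul_one_div_cancel (ne_of_gt hθ1), Real.rpow_one]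
  _ ≤ (c * G ^ θ) ^ (1 / (1 - θ)) := h3
  _ = c ^ (1 / (1 - θ)) * G ^ (θ / (1 - θ)) := by
      rw [Real.mul_rpow hc.le (Real.rpow_nonneg hG0 _), ← Real.rpow_mul hG0]
      ring_nf
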